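/- Let r > 0, θ ∈ (0, π), φ ∈ (0, π), L_x > 0, L_z > 0, η > 0, k₀ > 0, and set Φ = cos φ · sin θ, Ψ = sin φ · sin θ, Θ = cos θ. Then ∫_{−L_z/2}^{L_z/2} ∫_{−L_x}^{0} (η² k₀² / (4π)) · r·Ψ · (x² + z² − 2r(Φ·x + Θ·z) + r²)^(−3/2) dx dz = (η² k₀² / (4π)) · Σ_{u ∈ {−Φ, L_x/r + Φ}} Σ_{v ∈ {L_z/(2r) − Θ, L_z/(2r) + Θ}} arctan( u·v / (Ψ · √(Ψ² + u² + v²)) ). -/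

import Mathlib

/-- The function `ζ(Ψ, u, v) = arctan( u·v / (Ψ·√(Ψ² + u² + v²)) )` from the paper. -/
noncomputable def zeta (Ψ u v : ℝ) : ℝ :=
  Real.arctan (u * v / (Ψ * Real.sqrt (Ψ ^ 2 + u ^ 2 + v ^ 2)))

open Real intervalIntegral


noncomputable def Faux (a x z : ℝ) : ℝ :=
  Real.arctan (x * z / (a * Real.sqrt (a ^ 2 + x ^ 2 + z ^ 2)))

noncomputable def Gaux (a x z : ℝ) : ℝ :=
  a * x / ((a ^ 2 + z ^ 2) * Real.sqrt (a ^ 2 + x ^ 2 + z ^ 2))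

lemma rpow_neg_three_half {w : ℝ} (hw : 0 < w) :
    w ^ (-(3 : ℝ) / 2) = 1 / (w * Real.sqrt w) := by
  rw [Real.sqrt_eq_rpow, show (-(3 : ℝ) / 2) = -(1 + 1/2) by norm_num,
    Real.rpow_neg hw.le, Real.rpow_add hw, Real.rpow_one]
  exact (one_div _).symm

lemma hasDerivAt_G (a z : ℝ) (ha : 0 < a) (x : ℝ) :
    HasDerivAt (fun t => Gaux a t z) (a * (x ^ 2 + z ^ 2 + a ^ 2) ^ (-(3 : ℝ) / 2)) x := by
  have hw : (0:ℝ) < a ^ 2 + x ^ 2 + z ^ 2 := by positivity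
  have hs : (0:ℝ) < Real.sqrt (a ^ 2 + x ^ 2 + z ^ 2) := Real.sqrt_pos.2 hw
  have hS2 : Real.sqrt (a ^ 2 + x ^ 2 + z ^ 2) ^ 2 = a ^ 2 + x ^ 2 + z ^ 2 :=
    Real.sq_sqrt hw.le
  have hd : (0:ℝ) < a ^ 2 + z ^ 2 := by positivity
  have h1 : HasDerivAt (fun t : ℝ => a ^ 2 + t ^ 2 + z ^ 2) (2 * x) x := by
    have := (((hasDerivAt_pow 2 x).const_add (a ^ 2)).add_const (z ^ 2))
    simpa using this
  have h2 := h1.sqrt hw.ne'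
  have h3 := (h2.const_mul (a ^ 2 + z ^ 2))
  have h4 : HasDerivAt (fun t : ℝ => a * t) a x := by
    simpa using (hasDerivAt_id x).const_mul a
  have h5 := h4.div h3 (by positivity)
  refine h5.congr_deriv (Eq.symm ?_)
  rw [show x ^ 2 + z ^ 2 + a ^ 2 = a ^ 2 + x ^ 2 + z ^ 2 by ring,
    rpow_neg_three_half hw]
  set S := Real.sqrt (a ^ 2 + x ^ 2 + z ^ 2) with hS
  field_simp
  ring_nf
  linear_combination (-x^2) * hS2

lemma hasDerivAt_F (a x : ℝ) (ha : 0 < a) (z : ℝ) :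
    HasDerivAt (fun v => Faux a x v) (Gaux a x z) z := by
  have hw : (0:ℝ) < a ^ 2 + x ^ 2 + z ^ 2 := by positivity
  have hs : (0:ℝ) < Real.sqrt (a ^ 2 + x ^ 2 + z ^ 2) := Real.sqrt_pos.2 hw
  have hS2 : Real.sqrt (a ^ 2 + x ^ 2 + z ^ 2) ^ 2 = a ^ 2 + x ^ 2 + z ^ 2 :=
    Real.sq_sqrt hw.le
  have h1 : HasDerivAt (fun v : ℝ => a ^ 2 + x ^ 2 + v ^ 2) (2 * z) z := by
    have := (((hasDerivAt_pow 2 z).const_add (a ^ 2 + x ^ 2)))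
    simpa [add_assoc] using this
  have h2 := (h1.sqrt hw.ne').const_mul a
  have h3 : HasDerivAt (fun v : ℝ => x * v) x z := by
    simpa using (hasDerivAt_id z).const_mul x
  have h4 := h3.div h2 (by positivity)
  have h5 := h4.arctan
  refine h5.congr_deriv (Eq.symm ?_)
  unfold Gaux
  simp only [Pi.div_apply]
  set S := Real.sqrt (a ^ 2 + x ^ 2 + z ^ 2) with hS
  have hd : (0:ℝ) < a ^ 2 + z ^ 2 := by positivity
  field_simp
  ring_nf
  linear_combination (-x*z^2) * hS2

lemma cont_integrand (a z : ℝ) (ha : 0 < a) :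
    Continuous (fun x : ℝ => a * (x ^ 2 + z ^ 2 + a ^ 2) ^ (-(3 : ℝ) / 2)) := by
  apply Continuous.mul continuous_const
  apply Continuous.rpow_const (by continuity)
  intro x; left; positivity

lemma inner_integral (a z x1 x2 : ℝ) (ha : 0 < a) :
    ∫ x in x1..x2, a * (x ^ 2 + z ^ 2 + a ^ 2) ^ (-(3 : ℝ) / 2)
      = Gaux a x2 z - Gaux a x1 z :=
  intervalIntegral.integral_eq_sub_of_hasDerivAt
    (fun x _ => hasDerivAt_G a z ha x)
    ((cont_integrand a z ha).intervalIntegrable _ _)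

lemma cont_G (a x : ℝ) (ha : 0 < a) : Continuous (fun z => Gaux a x z) := by
  unfold Gaux
  apply Continuous.div continuous_const
  · continuity
  · intro z
    have h1 : (0:ℝ) < a ^ 2 + z ^ 2 := by positivity
    have h2 : (0:ℝ) < Real.sqrt (a ^ 2 + x ^ 2 + z ^ 2) := Real.sqrt_pos.2 (by positivity)
    positivity

lemma main_rect (a x1 x2 z1 z2 : ℝ) (ha : 0 < a) :
    ∫ z in z1..z2, ∫ x in x1..x2, a * (x ^ 2 + z ^ 2 + a ^ 2) ^ (-(3 : ℝ) / 2)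
      = (Faux a x2 z2 - Faux a x1 z2) - (Faux a x2 z1 - Faux a x1 z1) := by
  have h1 : (∫ z in z1..z2, ∫ x in x1..x2, a * (x ^ 2 + z ^ 2 + a ^ 2) ^ (-(3 : ℝ) / 2))
      = ∫ z in z1..z2, (Gaux a x2 z - Gaux a x1 z) := by
    apply intervalIntegral.integral_congr
    intro z _
    exact inner_integral a z x1 x2 ha
  rw [h1]
  exact intervalIntegral.integral_eq_sub_of_hasDerivAt
    (fun z _ => (hasDerivAt_F a x2 ha z).sub (hasDerivAt_F a x1 ha z))
    (((cont_G a x2 ha).sub (cont_G a x1 ha)).intervalIntegrable _ _)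

lemma Faux_scale (r Ψ u v : ℝ) (hr : 0 < r) :
    Faux (r * Ψ) (r * u) (r * v) = zeta Ψ u v := by
  unfold Faux zeta
  rw [show (r*Ψ)^2+(r*u)^2+(r*v)^2 = r^2*(Ψ^2+u^2+v^2) by ring,
    Real.sqrt_mul (by positivity) _, Real.sqrt_sq hr.le]
  congr 1
  rw [show r*u*(r*v) = r^2*(u*v) by ring,
    show r*Ψ*(r*Real.sqrt (Ψ^2+u^2+v^2)) = r^2*(Ψ*Real.sqrt (Ψ^2+u^2+v^2)) by ring,
    mul_div_mul_left _ _ (by positivity : (r:ℝ)^2 ≠ 0)]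

lemma zeta_neg_left (Ψ u v : ℝ) : zeta Ψ (-u) v = - zeta Ψ u v := by
  unfold zeta
  rw [show (-u)^2 = u^2 by ring, show (-u)*v = -(u*v) by ring, neg_div,
    Real.arctan_neg]

lemma zeta_neg_right (Ψ u v : ℝ) : zeta Ψ u (-v) = - zeta Ψ u v := by
  unfold zeta
  rw [show ((-v):ℝ)^2 = v^2 by ring, show u*(-v) = -(u*v) by ring, neg_div,
    Real.arctan_neg]


/-- The closed-form receive-aperture channel gain `g_r = ∫_{A_r} |a_r(𝐫)|² d𝐫`
(Theorem 2 of the paper), over the receive aperture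
`A_r = [−L_x, 0] × [−L_z/2, L_z/2]`, where
`|a_r(𝐫)|² = (η²k₀²/(4π)) · rΨ · (x² + z² − 2r(Φx + Θz) + r²)^{-3/2}` and
`Φ = cos φ sin θ`, `Ψ = sin φ sin θ`, `Θ = cos θ`. -/
theorem receive_channel_gain_closed_form
    (r θ φ Lx Lz η k₀ Φ Ψ Θ : ℝ)
    (hr : 0 < r) (hθ : θ ∈ Set.Ioo 0 Real.pi) (hφ : φ ∈ Set.Ioo 0 Real.pi)
    (hLx : 0 < Lx) (hLz : 0 < Lz) (hη : 0 < η) (hk : 0 < k₀)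
    (hΦ : Φ = Real.cos φ * Real.sin θ) (hΨ : Ψ = Real.sin φ * Real.sin θ)
    (hΘ : Θ = Real.cos θ) :
    ∫ z in (-(Lz / 2))..(Lz / 2), ∫ x in (-Lx)..(0 : ℝ),
        η ^ 2 * k₀ ^ 2 / (4 * Real.pi) * (r * Ψ) *
          (x ^ 2 + z ^ 2 - 2 * r * (Φ * x + Θ * z) + r ^ 2) ^ (-(3 : ℝ) / 2)
      = η ^ 2 * k₀ ^ 2 / (4 * Real.pi) *
          (zeta Ψ (-Φ) (Lz / (2 * r) - Θ) + zeta Ψ (-Φ) (Lz / (2 * r) + Θ)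
            + zeta Ψ (Lx / r + Φ) (Lz / (2 * r) - Θ)
            + zeta Ψ (Lx / r + Φ) (Lz / (2 * r) + Θ)) := by
  have hr0 : r ≠ 0 := hr.ne'
  have hΨpos : 0 < Ψ := by
    rw [hΨ]
    exact mul_pos (Real.sin_pos_of_pos_of_lt_pi hφ.1 hφ.2)
      (Real.sin_pos_of_pos_of_lt_pi hθ.1 hθ.2)
  have ha : 0 < r * Ψ := mul_pos hr hΨpos
  have h1 : Φ ^ 2 + Ψ ^ 2 + Θ ^ 2 = 1 := by
    subst hΦ hΨ hΘ
    have h2 := Real.sin_sq_add_cos_sq θ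
    have h3 := Real.sin_sq_add_cos_sq φ
    nlinarith
  have key : ∀ x z : ℝ, x ^ 2 + z ^ 2 - 2 * r * (Φ * x + Θ * z) + r ^ 2
      = (x - r * Φ) ^ 2 + (z - r * Θ) ^ 2 + (r * Ψ) ^ 2 := by
    intro x z
    linear_combination (-(r ^ 2)) * h1
  simp only [key]
  simp only [show ∀ w : ℝ, η ^ 2 * k₀ ^ 2 / (4 * Real.pi) * (r * Ψ) * w
      = η ^ 2 * k₀ ^ 2 / (4 * Real.pi) * (r * Ψ * w) from fun w => mul_assoc _ _ _]
  simp only [intervalIntegral.integral_const_mul]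
  congr 1
  simp only [← intervalIntegral.integral_const_mul]
  have hx : ∀ z : ℝ,
      (∫ x in (-Lx)..(0:ℝ), r * Ψ * ((x - r * Φ) ^ 2 + (z - r * Θ) ^ 2 + (r * Ψ) ^ 2) ^ (-(3:ℝ)/2))
        = ∫ x in (-Lx - r * Φ)..(-(r * Φ)),
            r * Ψ * (x ^ 2 + (z - r * Θ) ^ 2 + (r * Ψ) ^ 2) ^ (-(3:ℝ)/2) := by
    intro z
    have := intervalIntegral.integral_comp_sub_right (a := -Lx) (b := 0)
      (fun t => r * Ψ * (t ^ 2 + (z - r * Θ) ^ 2 + (r * Ψ) ^ 2) ^ (-(3:ℝ)/2)) (r * Φ)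
    simpa using this
  simp only [hx]
  have hz : (∫ z in (-(Lz / 2))..(Lz / 2),
        ∫ x in (-Lx - r * Φ)..(-(r * Φ)),
          r * Ψ * (x ^ 2 + (z - r * Θ) ^ 2 + (r * Ψ) ^ 2) ^ (-(3:ℝ)/2))
      = ∫ z in (-(Lz / 2) - r * Θ)..(Lz / 2 - r * Θ),
          ∫ x in (-Lx - r * Φ)..(-(r * Φ)),
            r * Ψ * (x ^ 2 + z ^ 2 + (r * Ψ) ^ 2) ^ (-(3:ℝ)/2) :=
    intervalIntegral.integral_comp_sub_right
      (fun w => ∫ x in (-Lx - r * Φ)..(-(r * Φ)),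
        r * Ψ * (x ^ 2 + w ^ 2 + (r * Ψ) ^ 2) ^ (-(3:ℝ)/2)) (r * Θ)
  rw [hz, main_rect (r * Ψ) (-Lx - r * Φ) (-(r * Φ)) (-(Lz / 2) - r * Θ) (Lz / 2 - r * Θ) ha]
  have e22 : Faux (r * Ψ) (-(r * Φ)) (Lz / 2 - r * Θ) = zeta Ψ (-Φ) (Lz / (2 * r) - Θ) := by
    rw [show -(r * Φ) = r * (-Φ) by ring,
      show Lz / 2 - r * Θ = r * (Lz / (2 * r) - Θ) by field_simp]
    exact Faux_scale r Ψ _ _ hr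
  have e12 : Faux (r * Ψ) (-Lx - r * Φ) (Lz / 2 - r * Θ)
      = - zeta Ψ (Lx / r + Φ) (Lz / (2 * r) - Θ) := by
    rw [show -Lx - r * Φ = r * (-(Lx / r + Φ)) by field_simp; ring,
      show Lz / 2 - r * Θ = r * (Lz / (2 * r) - Θ) by field_simp,
      Faux_scale r Ψ _ _ hr, zeta_neg_left]
  have e21 : Faux (r * Ψ) (-(r * Φ)) (-(Lz / 2) - r * Θ)
      = - zeta Ψ (-Φ) (Lz / (2 * r) + Θ) := by
    rw [show -(r * Φ) = r * (-Φ) by ring,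
      show -(Lz / 2) - r * Θ = r * (-(Lz / (2 * r) + Θ)) by field_simp; ring,
      Faux_scale r Ψ _ _ hr, zeta_neg_right]
  have e11 : Faux (r * Ψ) (-Lx - r * Φ) (-(Lz / 2) - r * Θ)
      = zeta Ψ (Lx / r + Φ) (Lz / (2 * r) + Θ) := by
    rw [show -Lx - r * Φ = r * (-(Lx / r + Φ)) by field_simp; ring,
      show -(Lz / 2) - r * Θ = r * (-(Lz / (2 * r) + Θ)) by field_simp; ring,
      Faux_scale r Ψ _ _ hr, zeta_neg_left, zeta_neg_right, neg_neg]
  rw [e22, e12, e21, e11]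
  ring
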